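/- Let a₁, a₂ be natural numbers with a₂ > a₁ > 1, let k_X, l_X > 0, and suppose k > k* where k* = (1/(a₂ − a₁)) · (l_X/a₁)^{a₁} · ((a₁ − 1)/k_X)^{a₁ − 1}. Then f(x) = k_X − l_X x + k(a₂ − a₁)x^{a₁} satisfies f(x) > 0 for all x > 0; in particular f has no zeros in (0, ∞). -/

import Mathlib

/-- For `k > k*`, the steady-state function `f(x) = k_X - l_X x + k(a₂ - a₁)x^{a₁}` of the
fully open network `0 ⇄ X, a₁X → a₂X` is strictly positive on `(0, ∞)`; in particular it
has no positive zeros. -/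
theorem no_steady_states_of_gt_kstar (a₁ a₂ : ℕ) (h1 : 1 < a₁) (h2 : a₁ < a₂)
    (kX lX k : ℝ) (hkX : 0 < kX) (hlX : 0 < lX) (hk : 0 < k)
    (hkgt : k > (1 / ((a₂ : ℝ) - (a₁ : ℝ))) * (lX / (a₁ : ℝ)) ^ a₁ *
      (((a₁ : ℝ) - 1) / kX) ^ (a₁ - 1)) :
    ∀ x : ℝ, 0 < x → 0 < kX - lX * x + k * ((a₂ : ℝ) - (a₁ : ℝ)) * x ^ a₁ := by
  intro x hx
  set A : ℝ := (a₁ : ℝ) with hAdef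
  have hA : (1:ℝ) < A := by simp only [hAdef]; exact_mod_cast h1
  have hA1 : (0:ℝ) < A - 1 := by linarith
  have hB : (0:ℝ) < (a₂:ℝ) - A := by
    have : (a₁:ℝ) < a₂ := by exact_mod_cast h2
    simp only [hAdef]; linarith
  set cs : ℝ := (lX / A) ^ a₁ * ((A - 1) / kX) ^ (a₁ - 1) with hcs
  have hcs0 : 0 < cs := by
    have h0 : (0:ℝ) < A := by linarith
    positivity
  have hc : cs < k * ((a₂:ℝ) - A) := by
    have h := hkgt
    rw [gt_iff_lt, mul_assoc, ← hcs] at h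
    calc cs = ((a₂:ℝ) - A) * (1 / ((a₂:ℝ) - A) * cs) := by field_simp
      _ < ((a₂:ℝ) - A) * k := mul_lt_mul_of_pos_left h hB
      _ = k * ((a₂:ℝ) - A) := mul_comm _ _
  set x₀ : ℝ := A * kX / ((A - 1) * lX) with hx₀def
  have h0A : (0:ℝ) < A := by linarith
  have hx₀ : 0 < x₀ := by positivity
  set t : ℝ := x / x₀ with htdef
  have ht : 0 < t := div_pos hx hx₀
  have hxt : x = x₀ * t := by
    rw [htdef]; field_simp
  -- key algebraic identity: cs * x₀ ^ a₁ = kX / (A - 1)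
  have e1 : lX / A * x₀ = kX / (A - 1) := by
    rw [hx₀def]; field_simp
  have e2 : kX / (A - 1) * ((A - 1) / kX) = 1 := by field_simp
  have hsplit : a₁ = (a₁ - 1) + 1 := (Nat.succ_pred_eq_of_pos (by omega)).symm
  have key1 : cs * x₀ ^ a₁ = kX / (A - 1) := by
    calc cs * x₀ ^ a₁ = (lX / A * x₀) ^ a₁ * ((A - 1) / kX) ^ (a₁ - 1) := by
          rw [hcs, mul_pow]; ring
      _ = (kX / (A - 1)) ^ a₁ * ((A - 1) / kX) ^ (a₁ - 1) := by rw [e1]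
      _ = ((kX / (A - 1)) ^ (a₁ - 1) * (kX / (A - 1))) * ((A - 1) / kX) ^ (a₁ - 1) := by
          have e3 : (kX / (A - 1)) ^ a₁ = (kX / (A - 1)) ^ (a₁ - 1) * (kX / (A - 1)) := by
            conv_lhs => rw [hsplit]
            rw [pow_succ]
          rw [e3]
      _ = (kX / (A - 1) * ((A - 1) / kX)) ^ (a₁ - 1) * (kX / (A - 1)) := by
          rw [mul_pow]; ring
      _ = kX / (A - 1) := by rw [e2, one_pow, one_mul]
  have key2 : lX * x₀ = A * kX / (A - 1) := by
    rw [hx₀def]; field_simp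
  -- Bernoulli
  have hbern : 1 + A * (t - 1) ≤ t ^ a₁ := by
    have := one_add_mul_le_pow (show (-2:ℝ) ≤ t - 1 by linarith) a₁
    simpa [hAdef] using this
  have hmain : 0 ≤ kX - lX * x + cs * x ^ a₁ := by
    have hxpow : x ^ a₁ = x₀ ^ a₁ * t ^ a₁ := by rw [hxt, mul_pow]
    have hq : 0 < kX / (A - 1) := by positivity
    have h3 : (kX / (A - 1)) * (1 + A * (t - 1)) ≤ (kX / (A - 1)) * t ^ a₁ :=
      mul_le_mul_of_nonneg_left hbern (le_of_lt hq)
    have hzero : kX - lX * (x₀ * t) + (kX / (A - 1)) * (1 + A * (t - 1)) = 0 := by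
      rw [show lX * (x₀ * t) = lX * x₀ * t by ring, key2]; field_simp; ring
    calc (0:ℝ) = kX - lX * (x₀ * t) + (kX / (A - 1)) * (1 + A * (t - 1)) := hzero.symm
      _ ≤ kX - lX * (x₀ * t) + (kX / (A - 1)) * t ^ a₁ := by linarith
      _ = kX - lX * x + cs * x ^ a₁ := by
          rw [hxpow, ← hxt, ← mul_assoc, key1]
  have hxp : 0 < x ^ a₁ := pow_pos hx _
  nlinarith [mul_pos (sub_pos.mpr hc) hxp, hmain]
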